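/- Let λ > 1, k_n = λ^n, and T > 0. Suppose u_n : [0,T] → [0,∞), n ≥ 1, are differentiable, satisfy the system u₁' = −k₁²u₁ + k₁²u₂ and u_n' = k_{n−1}²u_{n−1} − (k_{n−1}² + k_n²)u_n + k_n²u_{n+1} for n ≥ 2 pointwise on [0,T], and satisfy ∫₀ᵀ Σ_{n≥1} u_n(t) dt < ∞. Then for every t ∈ [0,T], Σ_{n≥1} λ^{−2n} u_n(t) ≤ Σ_{n≥1} λ^{−2n} u_n(0) (as an inequality in [0,∞]). -/

import Mathlib

open MeasureTheory Set Finset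

/-- Telescoping identity for the weighted sum of the right-hand sides. -/
lemma stmt4_tele (lam : ℝ) (hne : lam ≠ 0) (a d : ℕ → ℝ)
    (hd0 : d 0 = -(lam ^ 2) * a 0 + lam ^ 2 * a 1)
    (hdn : ∀ n : ℕ, d (n + 1)
      = lam ^ (2 * (n + 1)) * a n - (lam ^ (2 * (n + 1)) + lam ^ (2 * (n + 2))) * a (n + 1)
        + lam ^ (2 * (n + 2)) * a (n + 2)) :
    ∀ N : ℕ, ∑ m ∈ Finset.range (N + 1), lam ^ (-(2 * ((m : ℤ) + 1))) * d m
      = a (N + 1) - lam ^ (-2 : ℤ) * a N - (1 - lam ^ (-2 : ℤ)) * a 0 := by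
  have hz : ∀ (j : ℕ) (m : ℕ), lam ^ (-(2 * ((m : ℤ) + 1))) * lam ^ j
      = lam ^ ((j : ℤ) - 2 * ((m : ℤ) + 1)) := by
    intro j m
    rw [← zpow_natCast lam j, ← zpow_add₀ hne]
    ring_nf
  intro N
  induction N with
  | zero =>
      rw [zero_add, Finset.sum_range_one, hd0]
      have h2 : lam ^ (-(2 * (((0 : ℕ) : ℤ) + 1))) = lam ^ (-2 : ℤ) := by norm_num
      rw [h2]
      have h1 : lam ^ (-2 : ℤ) * lam ^ 2 = 1 := by
        rw [← zpow_natCast lam 2, ← zpow_add₀ hne]; norm_num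
      linear_combination (a 1 - a 0) * h1
  | succ K ih =>
      rw [Finset.sum_range_succ, ih, hdn K]
      have e1 : lam ^ (-(2 * (((K + 1 : ℕ) : ℤ) + 1))) * lam ^ (2 * (K + 1))
          = lam ^ (-2 : ℤ) := by
        rw [hz (2 * (K + 1)) (K + 1)]
        congr 1
        push_cast
        ring
      have e2 : lam ^ (-(2 * (((K + 1 : ℕ) : ℤ) + 1))) * lam ^ (2 * (K + 2)) = 1 := by
        rw [hz (2 * (K + 2)) (K + 1)]
        have : ((2 * (K + 2) : ℕ) : ℤ) - 2 * (((K + 1 : ℕ) : ℤ) + 1) = 0 := by push_cast; ring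
        rw [this, zpow_zero]
      have hidx : a (K + 1 + 1) = a (K + 2) := rfl
      rw [hidx]
      linear_combination (a K - a (K + 1)) * e1 + (a (K + 2) - a (K + 1)) * e2

/- STATEMENT 4. -/
theorem stmt_4 (lam T : ℝ) (hlam : 1 < lam) (hT : 0 < T) (u : ℕ → ℝ → ℝ)
    (hnonneg : ∀ n : ℕ, 1 ≤ n → ∀ t ∈ Set.Icc (0 : ℝ) T, 0 ≤ u n t)
    (hu1 : ∀ t ∈ Set.Icc (0 : ℝ) T,
      HasDerivAt (u 1) (-(lam ^ 2) * u 1 t + lam ^ 2 * u 2 t) t)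
    (hun : ∀ n : ℕ, ∀ t ∈ Set.Icc (0 : ℝ) T,
      HasDerivAt (u (n + 2))
        (lam ^ (2 * (n + 1)) * u (n + 1) t
          - (lam ^ (2 * (n + 1)) + lam ^ (2 * (n + 2))) * u (n + 2) t
          + lam ^ (2 * (n + 2)) * u (n + 3) t) t)
    (hint : ∫⁻ t in Set.Icc (0 : ℝ) T, ∑' n : ℕ, ENNReal.ofReal (u (n + 1) t) < ⊤) :
    ∀ t ∈ Set.Icc (0 : ℝ) T,
      ∑' n : ℕ, ENNReal.ofReal (lam ^ (-(2 * ((n : ℤ) + 1))) * u (n + 1) t)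
        ≤ ∑' n : ℕ, ENNReal.ofReal (lam ^ (-(2 * ((n : ℤ) + 1))) * u (n + 1) 0) := by
  have hl0 : (0 : ℝ) < lam := lt_trans zero_lt_one hlam
  have hne : lam ≠ 0 := ne_of_gt hl0
  set w : ℕ → ℝ := fun n => lam ^ (-(2 * ((n : ℤ) + 1))) with hw
  have hwpos : ∀ n, 0 < w n := fun n => zpow_pos hl0 _
  -- derivative functions
  set D : ℕ → ℝ → ℝ := fun n t =>
    Nat.rec (-(lam ^ 2) * u 1 t + lam ^ 2 * u 2 t)
      (fun k _ => lam ^ (2 * (k + 1)) * u (k + 1) t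
          - (lam ^ (2 * (k + 1)) + lam ^ (2 * (k + 2))) * u (k + 2) t
          + lam ^ (2 * (k + 2)) * u (k + 3) t) n with hD
  have hDeriv : ∀ n : ℕ, ∀ t ∈ Set.Icc (0 : ℝ) T, HasDerivAt (u (n + 1)) (D n t) t := by
    intro n t ht
    cases n with
    | zero => exact hu1 t ht
    | succ k => exact hun k t ht
  have hcont : ∀ n : ℕ, ContinuousOn (u (n + 1)) (Set.Icc (0 : ℝ) T) := by
    intro n t ht
    exact (hDeriv n t ht).continuousAt.continuousWithinAt
  have haemeas : ∀ n : ℕ, AEMeasurable (fun t => ENNReal.ofReal (u (n + 1) t))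
      (volume.restrict (Set.Icc (0 : ℝ) T)) := by
    intro n
    exact (ENNReal.measurable_ofReal.comp_aemeasurable
      ((hcont n).aemeasurable measurableSet_Icc))
  -- the lintegrals J
  set J : ℕ → ENNReal := fun n => ∫⁻ t in Set.Icc (0 : ℝ) T, ENNReal.ofReal (u (n + 1) t)
    with hJdef
  have hJsum : ∑' n : ℕ, J n ≠ ⊤ := by
    rw [← lintegral_tsum haemeas]
    exact hint.ne
  have hJ0 : Filter.Tendsto J Filter.atTop (nhds 0) :=
    ENNReal.tendsto_atTop_zero_of_tsum_ne_top hJsum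
  -- integrability
  have hInt : ∀ n : ℕ, IntegrableOn (u (n + 1)) (Set.Icc (0 : ℝ) T) volume :=
    fun n => (hcont n).integrableOn_Icc
  -- key real inequality for partial sums
  have key : ∀ N : ℕ, ∀ t ∈ Set.Icc (0 : ℝ) T,
      ∑ n ∈ Finset.range N, w n * u (n + 1) t
        ≤ ∑ n ∈ Finset.range N, w n * u (n + 1) 0
          + ∫ s in Set.Icc (0 : ℝ) T, u (N + 1) s := by
    intro N t ht
    have hInt0T : 0 ≤ ∫ s in Set.Icc (0 : ℝ) T, u (N + 1) s := by
      apply setIntegral_nonneg measurableSet_Icc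
      intro x hx; exact hnonneg (N + 1) (by omega) x hx
    cases N with
    | zero => simpa using hInt0T
    | succ K =>
      -- the function f
      set f : ℝ → ℝ := fun t =>
        (∑ n ∈ Finset.range (K + 1), w n * u (n + 1) t) - ∫ s in (0 : ℝ)..t, u (K + 2) s
        with hf
      have huIcc : Set.uIcc (0 : ℝ) T = Set.Icc 0 T := Set.uIcc_of_le hT.le
      have hfc : ContinuousOn f (Set.Icc (0 : ℝ) T) := by
        apply ContinuousOn.sub
        · exact continuousOn_finset_sum _ fun n _ =>
            (continuousOn_const.mul (hcont n))
        · have := intervalIntegral.continuousOn_primitive_interval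
            (f := u (K + 2)) (a := (0:ℝ)) (b := T) (μ := volume) (by rw [huIcc]; exact hInt (K+1))
          rwa [huIcc] at this
      have hintr : interior (Set.Icc (0 : ℝ) T) = Set.Ioo 0 T := interior_Icc
      have hfd : ∀ x ∈ Set.Ioo (0 : ℝ) T, HasDerivAt f
          ((∑ n ∈ Finset.range (K + 1), w n * D n x) - u (K + 2) x) x := by
        intro x hx
        have hxI : x ∈ Set.Icc (0 : ℝ) T := Set.Ioo_subset_Icc_self hx
        have h1 : HasDerivAt (fun t => ∑ n ∈ Finset.range (K + 1), w n * u (n + 1) t)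
            (∑ n ∈ Finset.range (K + 1), w n * D n x) x := by
          apply HasDerivAt.fun_sum
          intro n _
          exact (hDeriv n x hxI).const_mul (w n)
        have h2 : HasDerivAt (fun t => ∫ s in (0 : ℝ)..t, u (K + 2) s) (u (K + 2) x) x := by
          apply intervalIntegral.integral_hasDerivAt_right
          · exact (hInt (K + 1)).mono_set (by
              rw [Set.uIcc_of_le (Set.mem_Icc.1 hxI).1]
              exact Set.Icc_subset_Icc le_rfl (Set.mem_Icc.1 hxI).2) |>.intervalIntegrable
          · exact ContinuousOn.stronglyMeasurableAtFilter isOpen_Ioo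
              (fun y hy => ((hDeriv (K + 1) y (Set.Ioo_subset_Icc_self hy)).continuousAt).continuousWithinAt)
              x hx
          · exact (hDeriv (K + 1) x hxI).continuousAt
        exact h1.sub h2
      have hfanti : AntitoneOn f (Set.Icc (0 : ℝ) T) := by
        apply antitoneOn_of_deriv_nonpos (convex_Icc 0 T) hfc
        · rw [hintr]
          intro x hx
          exact (hfd x hx).differentiableAt.differentiableWithinAt
        · rw [hintr]
          intro x hx
          rw [(hfd x hx).deriv]
          have hxI : x ∈ Set.Icc (0 : ℝ) T := Set.Ioo_subset_Icc_self hx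
          have htel := stmt4_tele lam hne (fun n => u (n + 1) x) (fun n => D n x)
            rfl (fun n => rfl) K
          have hw2 : lam ^ (-2 : ℤ) ≤ 1 := by
            rw [zpow_neg]
            rw [inv_le_one_iff₀]
            right
            have : (1:ℝ) ≤ lam ^ (2:ℤ) := one_le_zpow₀ hlam.le (by norm_num)
            linarith
          have hw2' : (0:ℝ) < lam ^ (-2 : ℤ) := zpow_pos hl0 _
          have ha1 : 0 ≤ u 1 x := hnonneg 1 le_rfl x hxI
          have haK : 0 ≤ u (K + 1) x := hnonneg (K + 1) (by omega) x hxI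
          have haK2 : 0 ≤ u (K + 2) x := hnonneg (K + 2) (by omega) x hxI
          have : ∑ n ∈ Finset.range (K + 1), w n * D n x
              = u (K + 2) x - lam ^ (-2 : ℤ) * u (K + 1) x
                - (1 - lam ^ (-2 : ℤ)) * u 1 x := htel
          rw [this]
          nlinarith
      have h0I : (0 : ℝ) ∈ Set.Icc (0 : ℝ) T := Set.mem_Icc.2 ⟨le_rfl, hT.le⟩
      have hle := hfanti h0I ht (Set.mem_Icc.1 ht).1
      simp only [hf, intervalIntegral.integral_same, sub_zero] at hle
      -- hle : sum at t - ∫ 0..t ≤ sum at 0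
      have hIle : ∫ s in (0 : ℝ)..t, u (K + 2) s ≤ ∫ s in Set.Icc (0 : ℝ) T, u (K + 2) s := by
        rw [intervalIntegral.integral_of_le (Set.mem_Icc.1 ht).1]
        apply setIntegral_mono_set (hInt (K + 1))
        · filter_upwards [ae_restrict_mem measurableSet_Icc] with x hx
          exact hnonneg (K + 2) (by omega) x hx
        · exact Filter.Eventually.of_forall fun x hx =>
            ⟨lt_of_lt_of_le (Set.mem_Ioc.1 hx).1 le_rfl |>.le, le_trans (Set.mem_Ioc.1 hx).2 (Set.mem_Icc.1 ht).2⟩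
      linarith
  -- pass to ENNReal
  intro t ht
  rw [ENNReal.tsum_eq_iSup_nat]
  apply iSup_le
  intro M
  -- nonnegativity of terms
  have hterm : ∀ s ∈ Set.Icc (0:ℝ) T, ∀ n : ℕ, 0 ≤ w n * u (n + 1) s :=
    fun s hs n => mul_nonneg (hwpos n).le (hnonneg (n + 1) (by omega) s hs)
  have h0I : (0 : ℝ) ∈ Set.Icc (0 : ℝ) T := Set.mem_Icc.2 ⟨le_rfl, hT.le⟩
  have hMN : ∀ N : ℕ, M ≤ N →
      ∑ n ∈ Finset.range M, ENNReal.ofReal (w n * u (n + 1) t)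
        ≤ (∑' n : ℕ, ENNReal.ofReal (w n * u (n + 1) 0)) + J N := by
    intro N hMN
    have e1 : ∑ n ∈ Finset.range M, ENNReal.ofReal (w n * u (n + 1) t)
        = ENNReal.ofReal (∑ n ∈ Finset.range M, w n * u (n + 1) t) :=
      (ENNReal.ofReal_sum_of_nonneg fun n _ => hterm t ht n).symm
    rw [e1]
    have e2 : ∑ n ∈ Finset.range M, w n * u (n + 1) t
        ≤ ∑ n ∈ Finset.range N, w n * u (n + 1) t :=
      Finset.sum_le_sum_of_subset_of_nonneg (Finset.range_subset_range.2 hMN)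
        (fun n _ _ => hterm t ht n)
    have e3 := key N t ht
    have e4 : ENNReal.ofReal (∑ n ∈ Finset.range M, w n * u (n + 1) t)
        ≤ ENNReal.ofReal (∑ n ∈ Finset.range N, w n * u (n + 1) 0
            + ∫ s in Set.Icc (0 : ℝ) T, u (N + 1) s) :=
      ENNReal.ofReal_le_ofReal (le_trans e2 e3)
    refine le_trans e4 (le_trans ENNReal.ofReal_add_le (add_le_add ?_ ?_))
    · rw [ENNReal.ofReal_sum_of_nonneg fun n _ => hterm 0 h0I n]
      exact ENNReal.sum_le_tsum _
    · rw [ofReal_integral_eq_lintegral_ofReal (hInt N)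
        (by filter_upwards [ae_restrict_mem measurableSet_Icc] with x hx using
          hnonneg (N + 1) (by omega) x hx)]
  have hlim : Filter.Tendsto (fun N => (∑' n : ℕ, ENNReal.ofReal (w n * u (n + 1) 0)) + J N)
      Filter.atTop (nhds ((∑' n : ℕ, ENNReal.ofReal (w n * u (n + 1) 0)) + 0)) :=
    Filter.Tendsto.const_add _ hJ0
  rw [add_zero] at hlim
  show ∑ n ∈ Finset.range M, ENNReal.ofReal (w n * u (n + 1) t)
      ≤ ∑' n : ℕ, ENNReal.ofReal (w n * u (n + 1) 0)
  exact ge_of_tendsto hlim (Filter.eventually_atTop.2 ⟨M, hMN⟩)
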